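/- Let H = Δ + λV on ℓ²(ℤ^d_L) (a finite torus) with V diagonal with entries g_w, R = (H - z)^{-1}, and A a bounded operator. Then for any w, x, y: ∂_{g_w} (R A R*)_{xy} = −λ [ R_{xw} (R A R*)_{wy} + (R A R*)_{xw} (R*)_{wy} ]. Consequently ∑_w |∂_{g_w}(RAR*)_{xy}|² ≤ 4λ² ‖R‖²_{1→4} ‖R‖²_{1→2} ‖A‖²_{2→2} ‖R‖²_{2→4}. -/

import Mathlib

open Matrix
open scoped Classical

noncomputable section

/-- The nearest-neighbor Laplacian on the finite torus `ℤ^d_L`: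
`Δ_{a b} = 1` iff `a` and `b` differ by a standard unit vector. -/
noncomputable def torusLap (d L : ℕ) [NeZero L] :
    Matrix (Fin d → ZMod L) (Fin d → ZMod L) ℂ :=
  Matrix.of fun a b =>
    if ∃ j : Fin d, a = b + Pi.single j 1 ∨ b = a + Pi.single j 1 then 1 else 0

/-- The `ℓ^p → ℓ^q` operator norm of a matrix. -/
noncomputable def opNormPQ {ι : Type*} [Fintype ι] (p q : ℝ) (M : Matrix ι ι ℂ) : ℝ :=
  sInf {C : ℝ | 0 ≤ C ∧ ∀ v : ι → ℂ,
    (∑ y, ‖M.mulVec v y‖ ^ q) ^ q⁻¹ ≤ C * (∑ x, ‖v x‖ ^ p) ^ p⁻¹}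

section Aux

variable {ι : Type*} [Fintype ι] [DecidableEq ι]
set_option linter.unusedSectionVars false

lemma sum_rpow_root_le {q : ℝ} (hq : 1 ≤ q) (a : ι → ℝ) (ha : ∀ i, 0 ≤ a i) :
    (∑ i, a i ^ q) ^ q⁻¹ ≤ ∑ i, a i := by
  have hq0 : (0:ℝ) < q := lt_of_lt_of_le one_pos hq
  set S := ∑ i, a i with hS
  have hS0 : 0 ≤ S := Finset.sum_nonneg fun i _ => ha i
  have hterm : ∀ i, a i ^ q ≤ S ^ (q-1) * a i := by
    intro i
    rcases eq_or_lt_of_le (ha i) with h0 | hpos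
    · rw [← h0, Real.zero_rpow hq0.ne', mul_zero]
    · have hiS : a i ≤ S := Finset.single_le_sum (fun j _ => ha j) (Finset.mem_univ i)
      have he : a i ^ q = a i ^ (q-1) * a i := by
        have := Real.rpow_add_one hpos.ne' (q-1)
        rw [show q - 1 + 1 = q by ring] at this
        exact this
      rw [he]
      exact mul_le_mul_of_nonneg_right
        (Real.rpow_le_rpow (ha i) hiS (by linarith)) (ha i)
  have key : ∑ i, a i ^ q ≤ S ^ q := by
    calc ∑ i, a i ^ q ≤ ∑ i, S ^ (q-1) * a i := Finset.sum_le_sum fun i _ => hterm i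
    _ = S ^ (q-1) * S := by rw [← Finset.mul_sum]
    _ ≤ S ^ q := by
        rcases eq_or_lt_of_le hS0 with h0 | hpos
        · rw [← h0]; simp [Real.zero_rpow hq0.ne']
        · have h2 := Real.rpow_add_one hpos.ne' (q-1)
          rw [show q - 1 + 1 = q by ring] at h2
          rw [h2]
  calc (∑ i, a i ^ q) ^ q⁻¹ ≤ (S ^ q) ^ q⁻¹ :=
        Real.rpow_le_rpow (Finset.sum_nonneg fun i _ => Real.rpow_nonneg (ha i) q) key
          (inv_nonneg.2 hq0.le)
  _ = S := by rw [← Real.rpow_mul hS0, mul_inv_cancel₀ hq0.ne', Real.rpow_one]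

lemma opNormPQ_nonneg (p q : ℝ) (M : Matrix ι ι ℂ) : 0 ≤ opNormPQ p q M :=
  Real.sInf_nonneg fun _ hC => hC.1

lemma opNormPQ_prop {p q : ℝ} (hp : 1 ≤ p) (hq : 1 ≤ q) (M : Matrix ι ι ℂ) (v : ι → ℂ) :
    (∑ y, ‖M.mulVec v y‖ ^ q) ^ q⁻¹ ≤ opNormPQ p q M * (∑ x, ‖v x‖ ^ p) ^ p⁻¹ := by
  have hp0 : (0:ℝ) < p := lt_of_lt_of_le one_pos hp
  set s : Set ℝ := {C : ℝ | 0 ≤ C ∧ ∀ v : ι → ℂ,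
    (∑ y, ‖M.mulVec v y‖ ^ q) ^ q⁻¹ ≤ C * (∑ x, ‖v x‖ ^ p) ^ p⁻¹} with hs
  have hGb : ∀ (v : ι → ℂ) (x₀ : ι), ‖v x₀‖ ≤ (∑ x, ‖v x‖ ^ p) ^ p⁻¹ := by
    intro v x₀
    have h1 : ‖v x₀‖ ^ p ≤ ∑ x, ‖v x‖ ^ p :=
      Finset.single_le_sum (fun x _ => Real.rpow_nonneg (norm_nonneg _) p) (Finset.mem_univ x₀)
    calc ‖v x₀‖ = (‖v x₀‖ ^ p) ^ p⁻¹ := by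
          rw [← Real.rpow_mul (norm_nonneg _), mul_inv_cancel₀ hp0.ne', Real.rpow_one]
    _ ≤ _ := Real.rpow_le_rpow (Real.rpow_nonneg (norm_nonneg _) p) h1 (inv_nonneg.2 hp0.le)
  have hne : s.Nonempty := by
    refine ⟨∑ y, ∑ x, ‖M y x‖,
      Finset.sum_nonneg fun _ _ => Finset.sum_nonneg fun _ _ => norm_nonneg _, ?_⟩
    intro v
    have h1 : (∑ y, ‖M.mulVec v y‖ ^ q) ^ q⁻¹ ≤ ∑ y, ‖M.mulVec v y‖ :=
      sum_rpow_root_le hq _ fun _ => norm_nonneg _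
    refine h1.trans ?_
    rw [Finset.sum_mul]
    refine Finset.sum_le_sum fun y _ => ?_
    calc ‖M.mulVec v y‖ = ‖∑ x, M y x * v x‖ := by
          simp [Matrix.mulVec, dotProduct]
    _ ≤ ∑ x, ‖M y x * v x‖ := norm_sum_le _ _
    _ = ∑ x, ‖M y x‖ * ‖v x‖ := by simp [norm_mul]
    _ ≤ ∑ x, ‖M y x‖ * ((∑ x', ‖v x'‖ ^ p) ^ p⁻¹) :=
        Finset.sum_le_sum fun x _ => mul_le_mul_of_nonneg_left (hGb v x) (norm_nonneg _)
    _ = (∑ x, ‖M y x‖) * ((∑ x', ‖v x'‖ ^ p) ^ p⁻¹) := by rw [← Finset.sum_mul]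
  have hbdd : BddBelow s := ⟨0, fun C hC => hC.1⟩
  have hclosed : IsClosed s := by
    have : s = Set.Ici (0:ℝ) ∩ ⋂ v : ι → ℂ,
        {C : ℝ | (∑ y, ‖M.mulVec v y‖ ^ q) ^ q⁻¹ ≤ C * (∑ x, ‖v x‖ ^ p) ^ p⁻¹} := by
      ext C
      simp only [hs, Set.mem_setOf_eq, Set.mem_inter_iff, Set.mem_Ici, Set.mem_iInter]
    rw [this]
    exact isClosed_Ici.inter (isClosed_iInter fun v =>
      isClosed_le continuous_const (continuous_id.mul continuous_const))
  have hmem : sInf s ∈ s := hclosed.csInf_mem hne hbdd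
  have : opNormPQ p q M = sInf s := rfl
  rw [this]
  exact hmem.2 v


def l2n (u : ι → ℂ) : ℝ := (∑ i, ‖u i‖ ^ (2:ℝ)) ^ ((2:ℝ))⁻¹

lemma l2n_nonneg (u : ι → ℂ) : 0 ≤ l2n u :=
  Real.rpow_nonneg (Finset.sum_nonneg fun i _ => Real.rpow_nonneg (norm_nonneg _) _) _

lemma rpow_two_eq (r : ℝ) : r ^ (2:ℝ) = r ^ (2:ℕ) := by
  rw [show ((2:ℝ)) = ((2:ℕ):ℝ) by norm_num, Real.rpow_natCast]

lemma rpow_four_eq (r : ℝ) : r ^ (4:ℝ) = r ^ (4:ℕ) := by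
  rw [show ((4:ℝ)) = ((4:ℕ):ℝ) by norm_num, Real.rpow_natCast]

lemma l2n_sq (u : ι → ℂ) : l2n u ^ (2:ℕ) = ∑ i, ‖u i‖ ^ (2:ℕ) := by
  have hS : 0 ≤ ∑ i, ‖u i‖ ^ (2:ℝ) :=
    Finset.sum_nonneg fun i _ => Real.rpow_nonneg (norm_nonneg _) _
  rw [l2n, ← Real.rpow_natCast ((∑ i, ‖u i‖ ^ (2:ℝ)) ^ ((2:ℝ))⁻¹) 2, ← Real.rpow_mul hS]
  norm_num

lemma l2n_congr (u w : ι → ℂ) (h : ∀ i, ‖u i‖ = ‖w i‖) : l2n u = l2n w := by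
  unfold l2n; congr 1; exact Finset.sum_congr rfl fun i _ => by rw [h i]

lemma root4_le {S B : ℝ} (hS : 0 ≤ S) (h : S ^ ((4:ℝ))⁻¹ ≤ B) : S ≤ B ^ (4:ℕ) := by
  have h2 : (S ^ ((4:ℝ))⁻¹) ^ (4:ℕ) ≤ B ^ (4:ℕ) :=
    pow_le_pow_left₀ (Real.rpow_nonneg hS _) h 4
  calc S = (S ^ ((4:ℝ))⁻¹) ^ (4:ℕ) := by
        rw [← Real.rpow_natCast (S ^ ((4:ℝ))⁻¹) 4, ← Real.rpow_mul hS]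
        norm_num
  _ ≤ B ^ (4:ℕ) := h2

lemma single_sum (w : ι) {p : ℝ} (hp : p ≠ 0) :
    ∑ x, ‖(Pi.single w (1:ℂ) : ι → ℂ) x‖ ^ p = 1 := by
  rw [Fintype.sum_eq_single w]
  · simp
  · intro x hx; simp [Pi.single_eq_of_ne hx, Real.zero_rpow hp]

lemma l2n_mulVec_le (M : Matrix ι ι ℂ) (v : ι → ℂ) :
    l2n (M.mulVec v) ≤ opNormPQ 2 2 M * l2n v :=
  opNormPQ_prop (by norm_num) (by norm_num) M v

lemma mulVec4_le (M : Matrix ι ι ℂ) (v : ι → ℂ) :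
    ∑ i, ‖M.mulVec v i‖ ^ (4:ℕ) ≤ (opNormPQ 2 4 M * l2n v) ^ (4:ℕ) := by
  have h := opNormPQ_prop (p := 2) (q := 4) (by norm_num) (by norm_num) M v
  have h2 := root4_le (Finset.sum_nonneg fun i _ => Real.rpow_nonneg (norm_nonneg _) _) h
  calc ∑ i, ‖M.mulVec v i‖ ^ (4:ℕ) = ∑ i, ‖M.mulVec v i‖ ^ (4:ℝ) :=
        Finset.sum_congr rfl fun i _ => (rpow_four_eq _).symm
  _ ≤ _ := h2

lemma col14 (M : Matrix ι ι ℂ) (w : ι) :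
    ∑ i, ‖M i w‖ ^ (4:ℕ) ≤ opNormPQ 1 4 M ^ (4:ℕ) := by
  have h := opNormPQ_prop (p := 1) (q := 4) (by norm_num) (by norm_num) M (Pi.single w 1)
  rw [single_sum w (by norm_num : (1:ℝ) ≠ 0), Real.one_rpow, mul_one] at h
  have h2 := root4_le (Finset.sum_nonneg fun i _ => Real.rpow_nonneg (norm_nonneg _) _) h
  calc ∑ i, ‖M i w‖ ^ (4:ℕ) = ∑ i, ‖M.mulVec (Pi.single w 1) i‖ ^ (4:ℝ) := by
        refine Finset.sum_congr rfl fun i _ => ?_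
        simp [Matrix.mulVec_single, rpow_four_eq]
  _ ≤ _ := h2

lemma col12 (M : Matrix ι ι ℂ) (w : ι) : l2n (fun i => M i w) ≤ opNormPQ 1 2 M := by
  have h := opNormPQ_prop (p := 1) (q := 2) (by norm_num) (by norm_num) M (Pi.single w 1)
  rw [single_sum w (by norm_num : (1:ℝ) ≠ 0), Real.one_rpow, mul_one] at h
  have he : l2n (fun i => M i w) = (∑ y, ‖M.mulVec (Pi.single w 1) y‖ ^ (2:ℝ)) ^ ((2:ℝ))⁻¹ := by
    unfold l2n; congr 1
    exact Finset.sum_congr rfl fun i _ => by simp [Matrix.mulVec_single]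
  rw [he]; exact h

lemma cs_real (a b : ι → ℝ) (ha : ∀ i, 0 ≤ a i) (hb : ∀ i, 0 ≤ b i) {A B : ℝ}
    (hA : 0 ≤ A) (hB : 0 ≤ B) (h1 : ∑ i, a i ^ (2:ℕ) ≤ A ^ (2:ℕ))
    (h2 : ∑ i, b i ^ (2:ℕ) ≤ B ^ (2:ℕ)) : ∑ i, a i * b i ≤ A * B := by
  have hcs := Finset.sum_mul_sq_le_sq_mul_sq Finset.univ a b
  have hs : (∑ i, a i * b i) ^ (2:ℕ) ≤ (A * B) ^ (2:ℕ) := by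
    calc (∑ i, a i * b i) ^ (2:ℕ) ≤ (∑ i, a i ^ (2:ℕ)) * (∑ i, b i ^ (2:ℕ)) := hcs
    _ ≤ A ^ 2 * B ^ 2 := by
        refine mul_le_mul h1 h2 (Finset.sum_nonneg fun i _ => pow_nonneg (hb i) _)
          (pow_nonneg hA _)
    _ = (A * B) ^ 2 := by ring
  have hsum0 : 0 ≤ ∑ i, a i * b i :=
    Finset.sum_nonneg fun i _ => mul_nonneg (ha i) (hb i)
  nlinarith [hs, hsum0, mul_nonneg hA hB]

lemma cs_complex (u w : ι → ℂ) : ‖dotProduct (star u) w‖ ≤ l2n u * l2n w := by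
  have h1 : ‖dotProduct (star u) w‖ ≤ ∑ i, ‖u i‖ * ‖w i‖ := by
    calc ‖dotProduct (star u) w‖ = ‖∑ i, star (u i) * w i‖ := by
          simp [dotProduct]
    _ ≤ ∑ i, ‖star (u i) * w i‖ := norm_sum_le _ _
    _ = ∑ i, ‖u i‖ * ‖w i‖ := by simp [norm_mul]
  refine h1.trans ?_
  exact cs_real (fun i => ‖u i‖) (fun i => ‖w i‖) (fun i => norm_nonneg _)
    (fun i => norm_nonneg _) (l2n_nonneg u) (l2n_nonneg w)
    (le_of_eq (l2n_sq u).symm) (le_of_eq (l2n_sq w).symm)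

lemma dot_self_real (u : ι → ℂ) :
    dotProduct (star u) u = ((∑ i, Complex.normSq (u i) : ℝ) : ℂ) := by
  push_cast
  refine Finset.sum_congr rfl fun i _ => ?_
  simp [Pi.star_apply, Complex.star_def, Complex.normSq_eq_conj_mul_self]

lemma l2n_sq_eq_norm_dot (u : ι → ℂ) :
    l2n u ^ (2:ℕ) = ‖dotProduct (star u) u‖ := by
  rw [l2n_sq, dot_self_real]
  rw [Complex.norm_real]
  rw [Real.norm_of_nonneg (Finset.sum_nonneg fun i _ => Complex.normSq_nonneg _)]
  exact Finset.sum_congr rfl fun i _ => by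
    rw [Complex.normSq_eq_norm_sq]

lemma adjoint22 (M : Matrix ι ι ℂ) (v : ι → ℂ) :
    l2n (Mᴴ.mulVec v) ≤ opNormPQ 2 2 M * l2n v := by
  set u := Mᴴ.mulVec v with hu
  have hdot : dotProduct (star u) u = dotProduct (star (M.mulVec u)) v := by
    conv_lhs => rw [hu, Matrix.dotProduct_mulVec, ← Matrix.star_mulVec]
  have hle : l2n u ^ (2:ℕ) ≤ (opNormPQ 2 2 M * l2n u) * l2n v := by
    rw [l2n_sq_eq_norm_dot, hdot]
    exact (cs_complex (M.mulVec u) v).trans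
      (mul_le_mul_of_nonneg_right (l2n_mulVec_le M u) (l2n_nonneg v))
  rcases eq_or_lt_of_le (l2n_nonneg u) with h0 | hpos
  · rw [← h0]
    exact mul_nonneg (opNormPQ_nonneg _ _ _) (l2n_nonneg v)
  · nlinarith [hle, hpos]

lemma chain_bound (R B : Matrix ι ι ℂ) {C b : ℝ} (hC : 0 ≤ C) (hb : 0 ≤ b)
    (hB : ∀ v, l2n (B.mulVec v) ≤ C * l2n v) (y' : ι)
    (hcol : l2n (fun i => Rᴴ i y') ≤ b) :
    ∑ w', ‖(R * B * Rᴴ) w' y'‖ ^ (4:ℕ) ≤ (opNormPQ 2 4 R * (C * b)) ^ (4:ℕ) := by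
  set v1 := Rᴴ.mulVec (Pi.single y' (1:ℂ)) with hv1def
  have hv1 : l2n v1 ≤ b := by
    have he : l2n v1 = l2n (fun i => Rᴴ i y') := by
      refine l2n_congr _ _ fun i => ?_
      simp [hv1def, Matrix.mulVec_single]
    rw [he]; exact hcol
  have h2 : l2n (B.mulVec v1) ≤ C * b :=
    (hB v1).trans (mul_le_mul_of_nonneg_left hv1 hC)
  have h3 := mulVec4_le R (B.mulVec v1)
  calc ∑ w', ‖(R * B * Rᴴ) w' y'‖ ^ (4:ℕ)
      = ∑ w', ‖(R.mulVec (B.mulVec v1)) w'‖ ^ (4:ℕ) := by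
        refine Finset.sum_congr rfl fun w' _ => ?_
        congr 1
        have hc : (R * B * Rᴴ).mulVec (Pi.single y' 1) =
            R.mulVec (B.mulVec (Rᴴ.mulVec (Pi.single y' 1))) := by
          rw [← Matrix.mulVec_mulVec, ← Matrix.mulVec_mulVec]
        have h5 := congrFun hc w'
        simp only [Matrix.mulVec_single_one] at h5
        have hv1' : v1 = fun i => Rᴴ i y' := by
          funext i; simp [hv1def, Matrix.mulVec_single]
        rw [show (R * B * Rᴴ) w' y' = (R.mulVec (B.mulVec v1)) w' from h5.trans (by rw [hv1']; rfl)]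
  _ ≤ (opNormPQ 2 4 R * l2n (B.mulVec v1)) ^ (4:ℕ) := h3
  _ ≤ (opNormPQ 2 4 R * (C * b)) ^ (4:ℕ) := by
        refine pow_le_pow_left₀ (mul_nonneg (opNormPQ_nonneg _ _ _) (l2n_nonneg _)) ?_ 4
        exact mul_le_mul_of_nonneg_left h2 (opNormPQ_nonneg _ _ _)

lemma stdBasis_conjTranspose (w : ι) :
    (Matrix.single w w (1:ℂ))ᴴ = Matrix.single w w 1 := by
  ext a b
  simp only [Matrix.conjTranspose_apply, Matrix.single, Matrix.of_apply]
  rw [apply_ite (star : ℂ → ℂ), star_one, star_zero]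
  exact if_congr (by tauto) rfl rfl

lemma mid_entry (X Y : Matrix ι ι ℂ) (w x y : ι) :
    (X * Matrix.single w w (1:ℂ) * Y) x y = X x w * Y w y := by
  rw [Matrix.mul_assoc, Matrix.mul_apply, Fintype.sum_eq_single w]
  · rw [Matrix.single_mul_apply_same, one_mul]
  · intro k hk
    rw [Matrix.single_mul_apply_of_ne 1 w w k y hk Y, mul_zero]

lemma isUnit_sub_smul_one (M : Matrix ι ι ℂ) (hM : Mᴴ = M) {z : ℂ} (hz : z.im ≠ 0) :
    IsUnit (M - z • 1) := by
  rw [Matrix.isUnit_iff_isUnit_det, isUnit_iff_ne_zero]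
  intro hdet
  obtain ⟨v, hv0, hv⟩ := Matrix.exists_mulVec_eq_zero_iff.mpr hdet
  have hMv : M.mulVec v = z • v := by
    rw [Matrix.sub_mulVec, Matrix.smul_mulVec, Matrix.one_mulVec, sub_eq_zero] at hv
    exact hv
  have hsym : star (dotProduct (star v) (M.mulVec v))
      = dotProduct (star v) (M.mulVec v) := by
    calc star (dotProduct (star v) (M.mulVec v))
        = dotProduct (star (M.mulVec v)) v := by
          rw [Matrix.star_dotProduct, star_star]
    _ = dotProduct (Matrix.vecMul (star v) Mᴴ) v := by rw [Matrix.star_mulVec]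
    _ = dotProduct (Matrix.vecMul (star v) M) v := by rw [hM]
    _ = dotProduct (star v) (M.mulVec v) := (Matrix.dotProduct_mulVec _ _ _).symm
  set r : ℝ := ∑ i, Complex.normSq (v i) with hr
  have hzS : dotProduct (star v) (M.mulVec v) = z * (r : ℂ) := by
    rw [hMv, dotProduct_smul, smul_eq_mul, dot_self_real]
  rw [hzS, star_mul', Complex.star_def, Complex.conj_ofReal] at hsym
  have hfac : (z - (starRingEnd ℂ) z) * (r : ℂ) = 0 := by
    linear_combination (-1 : ℂ) * hsym
  rcases mul_eq_zero.mp hfac with h1 | h2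
  · exact absurd (Complex.conj_eq_iff_im.mp (sub_eq_zero.mp h1).symm) hz
  · have hr0 : r = 0 := by exact_mod_cast h2
    have hall : ∀ i ∈ Finset.univ, Complex.normSq (v i) = 0 :=
      (Finset.sum_eq_zero_iff_of_nonneg fun i _ => Complex.normSq_nonneg _).mp hr0
    exact hv0 (funext fun i => Complex.normSq_eq_zero.mp (hall i (Finset.mem_univ i)))

end Aux


attribute [local instance] Matrix.linftyOpNormedRing Matrix.linftyOpNormedAlgebra

/-- Derivative of `(R A R*)_{x y}` in a potential entry, and the resulting
gradient bound `∑_w |∂_{g_w}(RAR*)_{x y}|² ≤ 4λ²‖R‖²_{1→4}‖R‖²_{1→2}‖A‖²_{2→2}‖R‖²_{2→4}`. -/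
theorem RAR_deriv_and_gradient_bound (d L : ℕ) [NeZero L]
    (lam : ℝ) (hlam : 0 < lam) (g : (Fin d → ZMod L) → ℝ) (z : ℂ) (hz : 0 < z.im)
    (A : Matrix (Fin d → ZMod L) (Fin d → ZMod L) ℂ) :
    let H : ((Fin d → ZMod L) → ℝ) → Matrix (Fin d → ZMod L) (Fin d → ZMod L) ℂ :=
      fun gg => torusLap d L + (lam : ℂ) • Matrix.diagonal (fun i => ((gg i : ℝ) : ℂ))
        - z • (1 : Matrix (Fin d → ZMod L) (Fin d → ZMod L) ℂ)
    let R := (H g)⁻¹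
    let T := R * A * Rᴴ
    (∀ w x y : Fin d → ZMod L,
      HasDerivAt
        (fun t : ℝ => (((H (Function.update g w t))⁻¹) * A * ((H (Function.update g w t))⁻¹)ᴴ) x y)
        (-(lam : ℂ) * (R x w * T w y + T x w * Rᴴ w y)) (g w)) ∧
    (∀ x y : Fin d → ZMod L,
      ∑ w : Fin d → ZMod L, ‖-(lam : ℂ) * (R x w * T w y + T x w * Rᴴ w y)‖ ^ 2
        ≤ 4 * lam ^ 2 * opNormPQ 1 4 R ^ 2 * opNormPQ 1 2 R ^ 2
            * opNormPQ 2 2 A ^ 2 * opNormPQ 2 4 R ^ 2) := by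
  intro H R T
  have hT : T = R * A * Rᴴ := rfl
  have hH : ∀ gg : (Fin d → ZMod L) → ℝ, H gg =
      (torusLap d L + (lam:ℂ) • Matrix.diagonal fun i => ((gg i : ℝ) : ℂ)) - z • 1 :=
    fun _ => rfl
  have hLapT : (torusLap d L)ᵀ = torusLap d L := by
    ext a b
    simp only [Matrix.transpose_apply, torusLap, Matrix.of_apply]
    exact if_congr (by constructor <;> rintro ⟨j, hj⟩ <;> exact ⟨j, hj.symm⟩) rfl rfl
  have hHT : (H g)ᵀ = H g := by
    rw [hH g, Matrix.transpose_sub, Matrix.transpose_add, Matrix.transpose_smul,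
      Matrix.transpose_smul, Matrix.diagonal_transpose, Matrix.transpose_one, hLapT]
  have hRT : Rᵀ = R := by
    show ((H g)⁻¹)ᵀ = (H g)⁻¹
    rw [Matrix.transpose_nonsing_inv, hHT]
  have hRsymm : ∀ a b, R a b = R b a := by
    intro a b
    have h := congrFun (congrFun hRT a) b
    exact h.symm.trans (Matrix.transpose_apply R a b)
  have hRH_norm : ∀ a b, ‖Rᴴ a b‖ = ‖R a b‖ := by
    intro a b
    rw [Matrix.conjTranspose_apply, norm_star, hRsymm b a]
  constructor
  · -- derivative
    intro w x y
    haveI : CompleteSpace (Matrix (Fin d → ZMod L) (Fin d → ZMod L) ℂ) :=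
      FiniteDimensional.complete ℝ _
    have hdiagH : ∀ gg : (Fin d → ZMod L) → ℝ,
        ((lam:ℂ) • Matrix.diagonal fun i => ((gg i : ℝ) : ℂ))ᴴ
          = (lam:ℂ) • Matrix.diagonal fun i => ((gg i : ℝ) : ℂ) := by
      intro gg
      rw [Matrix.conjTranspose_smul, Matrix.diagonal_conjTranspose]
      have e1 : star ((lam:ℝ):ℂ) = ((lam:ℝ):ℂ) := by
        rw [Complex.star_def, Complex.conj_ofReal]
      have e2 : (star fun i : Fin d → ZMod L => ((gg i:ℝ):ℂ)) = fun i => ((gg i:ℝ):ℂ) := by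
        funext i
        simp [Complex.star_def, Complex.conj_ofReal]
      rw [e1, e2]
    have hLapH : (torusLap d L)ᴴ = torusLap d L := by
      ext a b
      simp only [Matrix.conjTranspose_apply, torusLap, Matrix.of_apply]
      rw [apply_ite (star : ℂ → ℂ), star_one, star_zero]
      exact if_congr (by constructor <;> rintro ⟨j, hj⟩ <;> exact ⟨j, hj.symm⟩) rfl rfl
    have hMherm : ∀ gg : (Fin d → ZMod L) → ℝ,
        (torusLap d L + (lam:ℂ) • Matrix.diagonal fun i => ((gg i:ℝ):ℂ))ᴴ
          = torusLap d L + (lam:ℂ) • Matrix.diagonal fun i => ((gg i:ℝ):ℂ) := by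
      intro gg
      rw [Matrix.conjTranspose_add, hLapH, hdiagH gg]
    have hunit : ∀ gg : (Fin d → ZMod L) → ℝ, IsUnit (H gg) := by
      intro gg
      rw [hH gg]
      exact isUnit_sub_smul_one _ (hMherm gg) (ne_of_gt hz)
    set E := Matrix.single w w (1:ℂ) with hE
    have hupdate : ∀ t : ℝ, H (Function.update g w t)
        = H g + ((lam : ℂ) * ((t:ℂ) - ((g w : ℝ):ℂ))) • E := by
      intro t
      rw [hH, hH]
      ext a b
      simp only [Matrix.sub_apply, Matrix.add_apply, Matrix.smul_apply,
        Matrix.diagonal_apply, hE, Matrix.single, Matrix.of_apply, smul_eq_mul]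
      split_ifs with h1 h2 h2
      · obtain ⟨hwa, -⟩ := h2
        subst hwa
        rw [Function.update_self]
        push_cast
        ring
      · have haw : a ≠ w := fun h => h2 ⟨h.symm, h.symm.trans h1⟩
        rw [Function.update_of_ne haw]
        ring
      · exact absurd (h2.1.symm.trans h2.2) h1
      · ring
    have hderivH : HasDerivAt (fun t : ℝ => H (Function.update g w t)) ((lam:ℂ) • E) (g w) := by
      have h0 : HasDerivAt (fun t : ℝ => (t:ℂ)) 1 (g w) := by
        simpa using (hasDerivAt_id (g w)).ofReal_comp
      have h1 := ((h0.sub_const ((g w : ℝ):ℂ)).const_mul ((lam:ℝ):ℂ)).smul_const E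
      have h2 := h1.const_add (H g)
      simp only [mul_one] at h2
      exact h2.congr_of_eventuallyEq (Filter.Eventually.of_forall fun t => hupdate t)
    have hu : IsUnit (H g) := hunit g
    have hpt : H (Function.update g w (g w)) = (hu.unit : Matrix _ _ ℂ) := by
      rw [Function.update_eq_self, hu.unit_spec]
    have hfd := hasFDerivAt_ringInverse (𝕜 := ℝ) hu.unit
    rw [← hpt] at hfd
    have hinv0 := hfd.comp_hasDerivAt (g w) hderivH
    have hinv : HasDerivAt (fun t : ℝ => (H (Function.update g w t))⁻¹)
        (-(R * ((lam:ℂ) • E) * R)) (g w) := by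
      have hval : (-(ContinuousLinearMap.mulLeftRight ℝ _ (↑hu.unit⁻¹) (↑hu.unit⁻¹)))
          ((lam:ℂ) • E) = -(R * ((lam:ℂ) • E) * R) := by
        rw [ContinuousLinearMap.neg_apply, ContinuousLinearMap.mulLeftRight_apply,
          Matrix.coe_units_inv, hu.unit_spec]
      rw [← hval]
      simp only [Function.comp_def, ← Matrix.nonsing_inv_eq_ringInverse] at hinv0
      exact hinv0
    let LC : Matrix (Fin d → ZMod L) (Fin d → ZMod L) ℂ →ₗ[ℝ]
        Matrix (Fin d → ZMod L) (Fin d → ZMod L) ℂ :=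
      { toFun := fun M => Mᴴ
        map_add' := fun M N => Matrix.conjTranspose_add M N
        map_smul' := fun r M => by
          simp [Matrix.conjTranspose_smul] }
    have hconj : HasDerivAt (fun t : ℝ => ((H (Function.update g w t))⁻¹)ᴴ)
        ((-(R * ((lam:ℂ) • E) * R))ᴴ) (g w) :=
      (LinearMap.toContinuousLinearMap LC).hasFDerivAt.comp_hasDerivAt (g w) hinv
    have hmul1 : HasDerivAt (fun t : ℝ => (H (Function.update g w t))⁻¹ * A)
        (-(R * ((lam:ℂ) • E) * R) * A) (g w) := hinv.mul_const A
    have hprod := hmul1.mul hconj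
    simp only [Function.update_eq_self] at hprod
    let eL : Matrix (Fin d → ZMod L) (Fin d → ZMod L) ℂ →ₗ[ℝ] ℂ :=
      { toFun := fun M => M x y
        map_add' := fun _ _ => rfl
        map_smul' := fun _ _ => rfl }
    have hfin := (LinearMap.toContinuousLinearMap eL).hasFDerivAt.comp_hasDerivAt (g w) hprod
    have hgoalval : (-(R * ((lam:ℂ) • E) * R) * A * ((H g)⁻¹)ᴴ
          + (H g)⁻¹ * A * (-(R * ((lam:ℂ) • E) * R))ᴴ) x y
        = -(lam:ℂ) * (R x w * T w y + T x w * Rᴴ w y) := by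
      have hEH : Eᴴ = E := by rw [hE]; exact stdBasis_conjTranspose w
      have hRg : (H g)⁻¹ = R := rfl
      have h1 : -(R * ((lam:ℂ) • E) * R) * A * Rᴴ = (-(lam:ℂ)) • (R * E * (R * A * Rᴴ)) := by
        simp only [Matrix.mul_smul, Matrix.smul_mul, Matrix.neg_mul, neg_smul, Matrix.mul_assoc]
      have h2 : R * A * (-(R * ((lam:ℂ) • E) * R))ᴴ = (-(lam:ℂ)) • ((R * A * Rᴴ) * E * Rᴴ) := by
        rw [Matrix.conjTranspose_neg, Matrix.conjTranspose_mul, Matrix.conjTranspose_mul,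
          Matrix.conjTranspose_smul, hEH, Complex.star_def, Complex.conj_ofReal]
        simp only [Matrix.mul_neg, Matrix.mul_smul, Matrix.smul_mul, neg_smul, Matrix.mul_assoc]
      rw [hRg, h1, h2, Matrix.add_apply, Matrix.smul_apply, Matrix.smul_apply, smul_eq_mul,
        smul_eq_mul, hT]
      have m1 : (R * E * (R * A * Rᴴ)) x y = R x w * (R * A * Rᴴ) w y := by
        rw [hE]; exact mid_entry R (R * A * Rᴴ) w x y
      have m2 : ((R * A * Rᴴ) * E * Rᴴ) x y = (R * A * Rᴴ) x w * Rᴴ w y := by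
        rw [hE]; exact mid_entry (R * A * Rᴴ) Rᴴ w x y
      rw [m1, m2]
      ring
    rw [← hgoalval]
    exact hfin
  · -- gradient bound
    intro x y
    have hcoly : ∀ y', l2n (fun i => Rᴴ i y') ≤ opNormPQ 1 2 R := by
      intro y'
      have he : l2n (fun i => Rᴴ i y') = l2n (fun i => R i y') :=
        l2n_congr _ _ fun i => hRH_norm i y'
      rw [he]; exact col12 R y'
    set P : ℝ := opNormPQ 2 4 R * (opNormPQ 2 2 A * opNormPQ 1 2 R) with hP
    have hP0 : 0 ≤ P := mul_nonneg (opNormPQ_nonneg _ _ _)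
      (mul_nonneg (opNormPQ_nonneg _ _ _) (opNormPQ_nonneg _ _ _))
    have hTcol : ∑ w', ‖T w' y‖ ^ (4:ℕ) ≤ P ^ (4:ℕ) := by
      rw [hT, hP]
      exact chain_bound R A (opNormPQ_nonneg _ _ _) (opNormPQ_nonneg _ _ _)
        (fun v => l2n_mulVec_le A v) y (hcoly y)
    have hTrow : ∑ w', ‖T x w'‖ ^ (4:ℕ) ≤ P ^ (4:ℕ) := by
      have hTH : ∀ w', ‖T x w'‖ = ‖(R * Aᴴ * Rᴴ) w' x‖ := by
        intro w'
        have h1 : R * Aᴴ * Rᴴ = (R * A * Rᴴ)ᴴ := by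
          rw [Matrix.conjTranspose_mul, Matrix.conjTranspose_mul,
            Matrix.conjTranspose_conjTranspose, Matrix.mul_assoc]
        rw [h1, Matrix.conjTranspose_apply, norm_star, ← hT]
      calc ∑ w', ‖T x w'‖ ^ (4:ℕ) = ∑ w', ‖(R * Aᴴ * Rᴴ) w' x‖ ^ (4:ℕ) :=
            Finset.sum_congr rfl fun w' _ => by rw [hTH w']
      _ ≤ P ^ (4:ℕ) := by
          rw [hP]
          exact chain_bound R Aᴴ (opNormPQ_nonneg _ _ _) (opNormPQ_nonneg _ _ _)
            (fun v => adjoint22 A v) x (hcoly x)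
    have hRrow : ∑ w', ‖R x w'‖ ^ (4:ℕ) ≤ opNormPQ 1 4 R ^ (4:ℕ) := by
      calc ∑ w', ‖R x w'‖ ^ (4:ℕ) = ∑ w', ‖R w' x‖ ^ (4:ℕ) :=
            Finset.sum_congr rfl fun w' _ => by rw [hRsymm x w']
      _ ≤ _ := col14 R x
    have hRHcol : ∑ w', ‖Rᴴ w' y‖ ^ (4:ℕ) ≤ opNormPQ 1 4 R ^ (4:ℕ) := by
      calc ∑ w', ‖Rᴴ w' y‖ ^ (4:ℕ) = ∑ w', ‖R w' y‖ ^ (4:ℕ) :=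
            Finset.sum_congr rfl fun w' _ => by rw [hRH_norm w' y]
      _ ≤ _ := col14 R y
    have hS1 : ∑ w', ‖R x w'‖ ^ (2:ℕ) * ‖T w' y‖ ^ (2:ℕ)
        ≤ opNormPQ 1 4 R ^ (2:ℕ) * P ^ (2:ℕ) := by
      refine cs_real _ _ (fun w' => pow_nonneg (norm_nonneg _) _)
        (fun w' => pow_nonneg (norm_nonneg _) _)
        (pow_nonneg (opNormPQ_nonneg _ _ _) _) (pow_nonneg hP0 _) ?_ ?_
      · calc ∑ w', (‖R x w'‖ ^ (2:ℕ)) ^ (2:ℕ) = ∑ w', ‖R x w'‖ ^ (4:ℕ) :=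
            Finset.sum_congr rfl fun w' _ => by ring
        _ ≤ opNormPQ 1 4 R ^ (4:ℕ) := hRrow
        _ = (opNormPQ 1 4 R ^ (2:ℕ)) ^ (2:ℕ) := by ring
      · calc ∑ w', (‖T w' y‖ ^ (2:ℕ)) ^ (2:ℕ) = ∑ w', ‖T w' y‖ ^ (4:ℕ) :=
            Finset.sum_congr rfl fun w' _ => by ring
        _ ≤ P ^ (4:ℕ) := hTcol
        _ = (P ^ (2:ℕ)) ^ (2:ℕ) := by ring
    have hS2 : ∑ w', ‖T x w'‖ ^ (2:ℕ) * ‖Rᴴ w' y‖ ^ (2:ℕ)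
        ≤ P ^ (2:ℕ) * opNormPQ 1 4 R ^ (2:ℕ) := by
      refine cs_real _ _ (fun w' => pow_nonneg (norm_nonneg _) _)
        (fun w' => pow_nonneg (norm_nonneg _) _)
        (pow_nonneg hP0 _) (pow_nonneg (opNormPQ_nonneg _ _ _) _) ?_ ?_
      · calc ∑ w', (‖T x w'‖ ^ (2:ℕ)) ^ (2:ℕ) = ∑ w', ‖T x w'‖ ^ (4:ℕ) :=
            Finset.sum_congr rfl fun w' _ => by ring
        _ ≤ P ^ (4:ℕ) := hTrow
        _ = (P ^ (2:ℕ)) ^ (2:ℕ) := by ring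
      · calc ∑ w', (‖Rᴴ w' y‖ ^ (2:ℕ)) ^ (2:ℕ) = ∑ w', ‖Rᴴ w' y‖ ^ (4:ℕ) :=
            Finset.sum_congr rfl fun w' _ => by ring
        _ ≤ opNormPQ 1 4 R ^ (4:ℕ) := hRHcol
        _ = (opNormPQ 1 4 R ^ (2:ℕ)) ^ (2:ℕ) := by ring
    have hpt : ∀ w', ‖-(lam:ℂ) * (R x w' * T w' y + T x w' * Rᴴ w' y)‖ ^ (2:ℕ)
        ≤ 2 * lam ^ 2 * (‖R x w'‖ ^ (2:ℕ) * ‖T w' y‖ ^ (2:ℕ)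
            + ‖T x w'‖ ^ (2:ℕ) * ‖Rᴴ w' y‖ ^ (2:ℕ)) := by
      intro w'
      have h1 : ‖-(lam:ℂ) * (R x w' * T w' y + T x w' * Rᴴ w' y)‖
          = lam * ‖R x w' * T w' y + T x w' * Rᴴ w' y‖ := by
        rw [norm_mul, norm_neg, Complex.norm_real, Real.norm_of_nonneg hlam.le]
      have h2 : ‖R x w' * T w' y + T x w' * Rᴴ w' y‖
          ≤ ‖R x w'‖ * ‖T w' y‖ + ‖T x w'‖ * ‖Rᴴ w' y‖ := by
        refine (norm_add_le _ _).trans ?_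
        rw [norm_mul, norm_mul]
      have h3 : ‖R x w' * T w' y + T x w' * Rᴴ w' y‖ ^ (2:ℕ)
          ≤ 2 * ((‖R x w'‖ * ‖T w' y‖) ^ (2:ℕ) + (‖T x w'‖ * ‖Rᴴ w' y‖) ^ (2:ℕ)) := by
        nlinarith [h2, norm_nonneg (R x w' * T w' y + T x w' * Rᴴ w' y),
          sq_nonneg (‖R x w'‖ * ‖T w' y‖ - ‖T x w'‖ * ‖Rᴴ w' y‖),
          mul_nonneg (mul_nonneg (norm_nonneg (R x w')) (norm_nonneg (T w' y)))
            (mul_nonneg (norm_nonneg (T x w')) (norm_nonneg (Rᴴ w' y)))]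
      calc ‖-(lam:ℂ) * (R x w' * T w' y + T x w' * Rᴴ w' y)‖ ^ (2:ℕ)
          = lam ^ 2 * ‖R x w' * T w' y + T x w' * Rᴴ w' y‖ ^ (2:ℕ) := by rw [h1]; ring
      _ ≤ lam ^ 2 * (2 * ((‖R x w'‖ * ‖T w' y‖) ^ (2:ℕ) + (‖T x w'‖ * ‖Rᴴ w' y‖) ^ (2:ℕ))) :=
          mul_le_mul_of_nonneg_left h3 (sq_nonneg lam)
      _ = 2 * lam ^ 2 * (‖R x w'‖ ^ (2:ℕ) * ‖T w' y‖ ^ (2:ℕ)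
            + ‖T x w'‖ ^ (2:ℕ) * ‖Rᴴ w' y‖ ^ (2:ℕ)) := by ring
    calc ∑ w' : Fin d → ZMod L, ‖-(lam:ℂ) * (R x w' * T w' y + T x w' * Rᴴ w' y)‖ ^ 2
        ≤ ∑ w' : Fin d → ZMod L, 2 * lam ^ 2 * (‖R x w'‖ ^ (2:ℕ) * ‖T w' y‖ ^ (2:ℕ)
            + ‖T x w'‖ ^ (2:ℕ) * ‖Rᴴ w' y‖ ^ (2:ℕ)) :=
          Finset.sum_le_sum fun w' _ => hpt w'
    _ = 2 * lam ^ 2 * ((∑ w', ‖R x w'‖ ^ (2:ℕ) * ‖T w' y‖ ^ (2:ℕ))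
          + ∑ w', ‖T x w'‖ ^ (2:ℕ) * ‖Rᴴ w' y‖ ^ (2:ℕ)) := by
        rw [← Finset.mul_sum, Finset.sum_add_distrib]
    _ ≤ 2 * lam ^ 2 * ((opNormPQ 1 4 R ^ (2:ℕ) * P ^ (2:ℕ))
          + P ^ (2:ℕ) * opNormPQ 1 4 R ^ (2:ℕ)) := by
        refine mul_le_mul_of_nonneg_left (add_le_add hS1 hS2) (by positivity)
    _ = 4 * lam ^ 2 * opNormPQ 1 4 R ^ 2 * opNormPQ 1 2 R ^ 2
          * opNormPQ 2 2 A ^ 2 * opNormPQ 2 4 R ^ 2 := by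
        rw [hP]; ring
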